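/- Let n_c, n_o, n_d be positive integers. Let V_{o,q} : ℝ^{n_o} → ℝ and V_{c,q} : ℝ^{n_c} → ℝ be functions with V_{o,q}(e) ≤ ᾱ_{o,q}(‖e‖) and V_{c,q}(x) ≤ ᾱ_{c,q}(‖x‖) for class K∞ functions ᾱ_{o,q}, ᾱ_{c,q}, let ℓ_q be a class K∞ function, and set V_q(x,e) := ℓ_q(V_{o,q}(e)) + V_{c,q}(x). Let V_p : ℝ^{n_c} × ℝ^{n_o} → ℝ be a function with V_p(x,e) ≥ α̲_p(‖(x,e)‖) for a class K∞ function α̲_p. Let g_c : ℝ^{n_c} × ℝ^{n_o} → ℝ^{n_c} and g_o : ℝ^{n_o} × ℝ^{n_d} → ℝ^{n_o} satisfy ‖g_c(x,e)‖ ≤ α̂_c(‖(x,e)‖) and ‖g_o(e,d)‖ ≤ α̂_o(‖e‖) + ρ̂_o(‖d‖) for class K∞ functions α̂_c, α̂_o, ρ̂_o. Then there exist class K∞ functions χ and ρ such that for all (x,e,d): V_q(g_c(x,e), g_o(e,d)) ≤ χ(V_p(x,e)) + ρ(‖d‖). -/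

import Mathlib

/-- A class `K` function: continuous, strictly increasing on `[0,∞)`, vanishing at `0`. -/
def IsClassK (f : ℝ → ℝ) : Prop :=
  ContinuousOn f (Set.Ici 0) ∧ StrictMonoOn f (Set.Ici 0) ∧ f 0 = 0

/-- A class `K∞` function: a class `K` function that is unbounded. -/
def IsClassKInf (f : ℝ → ℝ) : Prop :=
  IsClassK f ∧ ∀ M : ℝ, ∃ s, 0 ≤ s ∧ M < f s



namespace ClassKAux

lemma nonneg {f : ℝ → ℝ} (hf : IsClassKInf f) {s : ℝ} (hs : 0 ≤ s) : 0 ≤ f s := by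
  have := hf.1.2.1.monotoneOn Set.self_mem_Ici hs hs
  rw [hf.1.2.2] at this; exact this

lemma monoOn {f : ℝ → ℝ} (hf : IsClassKInf f) : MonotoneOn f (Set.Ici 0) :=
  hf.1.2.1.monotoneOn

lemma mapsTo {f : ℝ → ℝ} (hf : IsClassKInf f) :
    Set.MapsTo f (Set.Ici 0) (Set.Ici 0) := fun s hs => nonneg hf hs

lemma comp {f g : ℝ → ℝ} (hf : IsClassKInf f) (hg : IsClassKInf g) :
    IsClassKInf (fun s => f (g s)) := by
  have gmap := mapsTo hg
  refine ⟨⟨hf.1.1.comp hg.1.1 gmap, hf.1.2.1.comp hg.1.2.1 gmap, by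
    simp [hg.1.2.2, hf.1.2.2]⟩, ?_⟩
  intro M
  obtain ⟨s₁, hs₁, hM⟩ := hf.2 M
  obtain ⟨s, hs, hss⟩ := hg.2 s₁
  exact ⟨s, hs, hM.trans_le (monoOn hf hs₁ (gmap hs) hss.le)⟩

lemma add {f g : ℝ → ℝ} (hf : IsClassKInf f) (hg : IsClassKInf g) :
    IsClassKInf (fun s => f s + g s) := by
  refine ⟨⟨hf.1.1.add hg.1.1, fun a ha b hb hab =>
    add_lt_add (hf.1.2.1 ha hb hab) (hg.1.2.1 ha hb hab), by
    simp [hf.1.2.2, hg.1.2.2]⟩, ?_⟩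
  intro M
  obtain ⟨s, hs, hM⟩ := hf.2 M
  exact ⟨s, hs, show M < f s + g s by have := nonneg hg hs; linarith⟩

lemma mulLeft {c : ℝ} (hc : 0 < c) : IsClassKInf (fun s => c * s) := by
  refine ⟨⟨(continuous_const.mul continuous_id).continuousOn, fun a _ b _ hab =>
    (mul_lt_mul_iff_right₀ hc).2 hab, by ring⟩, fun M => ?_⟩
  refine ⟨(max M 0) / c + 1, by positivity, ?_⟩
  have h1 : M ≤ max M 0 := le_max_left _ _
  show M < c * ((max M 0) / c + 1)
  have : c * ((max M 0) / c + 1) = max M 0 + c := by field_simp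
  rw [this]; linarith

lemma weak_triangle {f : ℝ → ℝ} (hf : IsClassKInf f) {a b : ℝ} (ha : 0 ≤ a) (hb : 0 ≤ b) :
    f (a + b) ≤ f (2 * a) + f (2 * b) := by
  rcases le_total a b with h | h
  · have h1 : f (a + b) ≤ f (2 * b) :=
      monoOn hf (Set.mem_Ici.2 (by positivity)) (Set.mem_Ici.2 (by positivity)) (by linarith)
    have h2 : 0 ≤ f (2 * a) := nonneg hf (by positivity)
    linarith
  · have h1 : f (a + b) ≤ f (2 * a) :=
      monoOn hf (Set.mem_Ici.2 (by positivity)) (Set.mem_Ici.2 (by positivity)) (by linarith)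
    have h2 : 0 ≤ f (2 * b) := nonneg hf (by positivity)
    linarith

lemma inv_exists {f : ℝ → ℝ} (hf : IsClassKInf f) :
    ∃ g : ℝ → ℝ, IsClassKInf g ∧ ∀ s, 0 ≤ s → g (f s) = s := by
  set S := Set.Ici (0 : ℝ)
  have hS : ∀ t : S, (0:ℝ) ≤ (t : ℝ) := fun t => t.2
  let F : S → S := fun s => ⟨f s, nonneg hf s.2⟩
  have hFmono : StrictMono F := fun a b hab => by
    exact Subtype.mk_lt_mk.2 (hf.1.2.1 a.2 b.2 (Subtype.coe_lt_coe.2 hab))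
  have hFsurj : Function.Surjective F := by
    intro t
    obtain ⟨s₁, hs₁, hlt⟩ := hf.2 (t : ℝ)
    have hsub : Set.Icc (0:ℝ) s₁ ⊆ Set.Ici 0 := Set.Icc_subset_Ici_self
    have hiv := intermediate_value_Icc hs₁ (hf.1.1.mono hsub)
    have ht : (t : ℝ) ∈ Set.Icc (f 0) (f s₁) := by
      rw [hf.1.2.2]; exact ⟨t.2, hlt.le⟩
    obtain ⟨a, ha, hfa⟩ := hiv ht
    exact ⟨⟨a, ha.1⟩, Subtype.ext hfa⟩
  let iso := StrictMono.orderIsoOfSurjective F hFmono hFsurj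
  let g : ℝ → ℝ := fun t => if h : 0 ≤ t then (iso.symm ⟨t, h⟩ : ℝ) else 0
  have hginv : ∀ s, 0 ≤ s → g (f s) = s := by
    intro s hs
    have h0 : 0 ≤ f s := nonneg hf hs
    have : iso.symm ⟨f s, h0⟩ = ⟨s, hs⟩ := by
      have := StrictMono.orderIsoOfSurjective_symm_apply_self F hFmono hFsurj ⟨s, hs⟩
      simpa [iso, F] using this
    simp only [g, dif_pos h0, this]
  have hgrestrict : S.domRestrict g = fun t : S => (iso.symm t : ℝ) := by
    funext t
    simp only [Set.domRestrict_apply, g, dif_pos (hS t)]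
  refine ⟨g, ⟨⟨?_, ?_, ?_⟩, ?_⟩, hginv⟩
  · rw [continuousOn_iff_continuous_restrict, hgrestrict]
    exact continuous_subtype_val.comp (OrderIso.continuous iso.symm)
  · intro a ha b hb hab
    have ha' : (0:ℝ) ≤ a := ha
    have hb' : (0:ℝ) ≤ b := hb
    have : iso.symm ⟨a, ha'⟩ < iso.symm ⟨b, hb'⟩ :=
      iso.symm.strictMono (Subtype.mk_lt_mk.2 hab)
    show g a < g b
    simp only [g]
    rw [dif_pos ha', dif_pos hb']
    exact Subtype.coe_lt_coe.2 this
  · have := hginv 0 le_rfl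
    rwa [hf.1.2.2] at this
  · intro M
    refine ⟨f (max M 0 + 1), nonneg hf (by positivity), ?_⟩
    rw [hginv _ (by positivity)]
    have := le_max_left M 0
    linarith

end ClassKAux


theorem stmt_4 (nc no nd : ℕ) (hnc : 0 < nc) (hno : 0 < no) (hnd : 0 < nd)
    (V_oq : EuclideanSpace ℝ (Fin no) → ℝ) (V_cq : EuclideanSpace ℝ (Fin nc) → ℝ)
    (hVoq_nonneg : ∀ e, 0 ≤ V_oq e) (hVcq_nonneg : ∀ x, 0 ≤ V_cq x)
    (αbar_oq αbar_cq ℓq αlo_p αhat_c αhat_o ρhat_o : ℝ → ℝ)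
    (hαbar_oq : IsClassKInf αbar_oq) (hαbar_cq : IsClassKInf αbar_cq) (hℓq : IsClassKInf ℓq)
    (hαlo_p : IsClassKInf αlo_p) (hαhat_c : IsClassKInf αhat_c) (hαhat_o : IsClassKInf αhat_o)
    (hρhat_o : IsClassKInf ρhat_o)
    (hVoq : ∀ e, V_oq e ≤ αbar_oq ‖e‖) (hVcq : ∀ x, V_cq x ≤ αbar_cq ‖x‖)
    (V_p : EuclideanSpace ℝ (Fin nc) → EuclideanSpace ℝ (Fin no) → ℝ)
    (hVp : ∀ x e, αlo_p (Real.sqrt (‖x‖ ^ 2 + ‖e‖ ^ 2)) ≤ V_p x e)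
    (g_c : EuclideanSpace ℝ (Fin nc) → EuclideanSpace ℝ (Fin no) → EuclideanSpace ℝ (Fin nc))
    (g_o : EuclideanSpace ℝ (Fin no) → EuclideanSpace ℝ (Fin nd) → EuclideanSpace ℝ (Fin no))
    (hgc : ∀ x e, ‖g_c x e‖ ≤ αhat_c (Real.sqrt (‖x‖ ^ 2 + ‖e‖ ^ 2)))
    (hgo : ∀ e d, ‖g_o e d‖ ≤ αhat_o ‖e‖ + ρhat_o ‖d‖) :
    ∃ χ ρ : ℝ → ℝ, IsClassKInf χ ∧ IsClassKInf ρ ∧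
      ∀ (x : EuclideanSpace ℝ (Fin nc)) (e : EuclideanSpace ℝ (Fin no))
        (d : EuclideanSpace ℝ (Fin nd)),
        ℓq (V_oq (g_o e d)) + V_cq (g_c x e) ≤ χ (V_p x e) + ρ ‖d‖ := by
  classical
  open ClassKAux in
  -- the composed class K∞ function ℓq ∘ αbar_oq
  have hLA : IsClassKInf (fun s => ℓq (αbar_oq s)) := comp hℓq hαbar_oq
  -- inverse of αlo_p
  obtain ⟨β, hβ, hβinv⟩ := inv_exists hαlo_p
  -- building blocks
  have h2 : IsClassKInf (fun s => (2:ℝ) * s) := mulLeft (by norm_num)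
  have hG1 : IsClassKInf (fun s => ℓq (αbar_oq (2 * αhat_o s))) :=
    comp (f := fun s => ℓq (αbar_oq s)) (g := fun s => 2 * αhat_o s) hLA
      (comp (f := fun s => (2:ℝ) * s) (g := αhat_o) h2 hαhat_o)
  have hG2 : IsClassKInf (fun s => αbar_cq (αhat_c s)) := comp hαbar_cq hαhat_c
  set G : ℝ → ℝ := fun s => ℓq (αbar_oq (2 * αhat_o s)) + αbar_cq (αhat_c s) with hGdef
  have hG : IsClassKInf G := add hG1 hG2
  refine ⟨fun t => G (β t), fun t => ℓq (αbar_oq (2 * ρhat_o t)),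
    comp hG hβ, comp (f := fun s => ℓq (αbar_oq s)) (g := fun s => 2 * ρhat_o s) hLA
      (comp (f := fun s => (2:ℝ) * s) (g := ρhat_o) h2 hρhat_o), ?_⟩
  intro x e d
  set r := Real.sqrt (‖x‖ ^ 2 + ‖e‖ ^ 2) with hrdef
  have hr0 : 0 ≤ r := Real.sqrt_nonneg _
  have her : ‖e‖ ≤ r := by
    have h1 : ‖e‖ ^ 2 ≤ ‖x‖ ^ 2 + ‖e‖ ^ 2 := by nlinarith [norm_nonneg x]
    calc ‖e‖ = Real.sqrt (‖e‖ ^ 2) := (Real.sqrt_sq (norm_nonneg e)).symm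
      _ ≤ r := Real.sqrt_le_sqrt h1
  have hne : (0:ℝ) ≤ ‖e‖ := norm_nonneg e
  have hnd' : (0:ℝ) ≤ ‖d‖ := norm_nonneg d
  have hA : (0:ℝ) ≤ αhat_o ‖e‖ := nonneg hαhat_o hne
  have hB : (0:ℝ) ≤ ρhat_o ‖d‖ := nonneg hρhat_o hnd'
  -- term 1
  have t1 : ℓq (V_oq (g_o e d)) ≤ ℓq (αbar_oq (αhat_o ‖e‖ + ρhat_o ‖d‖)) := by
    apply monoOn hℓq (Set.mem_Ici.2 (hVoq_nonneg _))
      (Set.mem_Ici.2 (nonneg hαbar_oq (by positivity)))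
    exact (hVoq _).trans (monoOn hαbar_oq (Set.mem_Ici.2 (norm_nonneg _))
      (Set.mem_Ici.2 (by positivity)) (hgo e d))
  have t1b : ℓq (αbar_oq (αhat_o ‖e‖ + ρhat_o ‖d‖)) ≤
      ℓq (αbar_oq (2 * αhat_o ‖e‖)) + ℓq (αbar_oq (2 * ρhat_o ‖d‖)) :=
    weak_triangle hLA hA hB
  have t1c : ℓq (αbar_oq (2 * αhat_o ‖e‖)) ≤ ℓq (αbar_oq (2 * αhat_o r)) := by
    refine monoOn hG1 (Set.mem_Ici.2 hne) (Set.mem_Ici.2 hr0) her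
  -- term 2
  have t2 : V_cq (g_c x e) ≤ αbar_cq (αhat_c r) := by
    refine (hVcq _).trans (monoOn hαbar_cq (Set.mem_Ici.2 (norm_nonneg _))
      (Set.mem_Ici.2 (nonneg hαhat_c hr0)) ((hgc x e).trans_eq rfl))
  -- combine
  have hGr : ℓq (V_oq (g_o e d)) + V_cq (g_c x e) ≤ G r + ℓq (αbar_oq (2 * ρhat_o ‖d‖)) := by
    simp only [hGdef]; linarith
  have hβr : β (αlo_p r) = r := hβinv r hr0
  have hχ : G r ≤ G (β (V_p x e)) := by
    have h1 : αlo_p r ≤ V_p x e := hVp x e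
    have h2' : (0:ℝ) ≤ αlo_p r := nonneg hαlo_p hr0
    have := monoOn (comp hG hβ) (Set.mem_Ici.2 h2') (Set.mem_Ici.2 (h2'.trans h1)) h1
    simpa [hβr] using this
  linarith
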